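/- For a finite connected graph, the eigenspace of the bond-scattering matrix S for eigenvalue 1 has dimension β + 1 = m − n + 2, spanned by the all-ones vector together with β independent τ-antisymmetric harmonic 1-forms. -/

import Mathlib

open Matrix BigOperators
open scoped Classical Kronecker

noncomputable section
set_option linter.unusedSectionVars false
set_option linter.unreachableTactic false
set_option linter.unnecessarySeqFocus false
set_option linter.unusedTactic false
set_option linter.unusedVariables false

variable {V E : Type*} [Fintype V] [Fintype E] [DecidableEq V] [DecidableEq E]

/-- Incidence indicator matrix: entry `(v, e)` is `1` iff `f e = v`. -/
def incMat (f : E → V) : Matrix V E ℂ :=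
  Matrix.of fun v e => if f e = v then 1 else 0

/-- Edge-reversal permutation matrix. -/
def revMat (rev : E → E) : Matrix E E ℂ :=
  Matrix.of fun e f => if f = rev e then 1 else 0

/-- Degree of a vertex (number of oriented edges terminating there). -/
def deg (t : E → V) (v : V) : ℕ :=
  Finset.card (Finset.univ.filter fun e => t e = v)

/-- Diagonal degree matrix. -/
def degMat (t : E → V) : Matrix V V ℂ :=
  Matrix.diagonal fun v => (deg t v : ℂ)

/-- The bond-scattering matrix `S = 2 δ_s D⁻¹ δ_t* − τ`. -/
def bondS (s t : E → V) (rev : E → E) : Matrix E E ℂ :=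
  (2 : ℂ) • ((incMat s).transpose * (degMat t)⁻¹ * incMat t) - revMat rev

def avg (t : E → V) (x : E → ℂ) (v : V) : ℂ :=
  ((deg t v : ℂ))⁻¹ * ∑ e ∈ Finset.univ.filter (fun e => t e = v), x e

lemma incMat_mulVec (f : E → V) (x : E → ℂ) (v : V) :
    (incMat f).mulVec x v = ∑ e ∈ Finset.univ.filter (fun e => f e = v), x e := by
  simp [incMat, Matrix.mulVec, dotProduct, Finset.sum_filter, ite_mul]

lemma incMatT_mulVec (f : E → V) (y : V → ℂ) (e : E) :
    (incMat f).transpose.mulVec y e = y (f e) := by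
  simp [incMat, Matrix.mulVec, dotProduct, Matrix.transpose, ite_mul]

lemma revMat_mulVec (rev : E → E) (x : E → ℂ) (e : E) :
    (revMat rev).mulVec x e = x (rev e) := by
  simp [revMat, Matrix.mulVec, dotProduct, ite_mul]

lemma degMat_inv (t : E → V) (hd : ∀ v, 0 < deg t v) :
    (degMat t)⁻¹ = Matrix.diagonal fun v => ((deg t v : ℂ))⁻¹ := by
  apply Matrix.inv_eq_right_inv
  rw [degMat, Matrix.diagonal_mul_diagonal]
  convert Matrix.diagonal_one with v
  exact mul_inv_cancel₀ (by exact_mod_cast (hd v).ne')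

lemma mulVec3 (A : Matrix E V ℂ) (B : Matrix V V ℂ) (C : Matrix V E ℂ) (x : E → ℂ) :
    (A * B * C).mulVec x = A.mulVec (B.mulVec (C.mulVec x)) := by
  rw [← Matrix.mulVec_mulVec, ← Matrix.mulVec_mulVec]

lemma bondS_mulVec (s t : E → V) (rev : E → E) (hd : ∀ v, 0 < deg t v) (x : E → ℂ) (e : E) :
    (bondS s t rev).mulVec x e = 2 * avg t x (s e) - x (rev e) := by
  rw [bondS, Matrix.sub_mulVec, Matrix.smul_mulVec, mulVec3, degMat_inv t hd]
  simp only [Pi.sub_apply, Pi.smul_apply, smul_eq_mul, incMatT_mulVec, Matrix.mulVec_diagonal,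
    incMat_mulVec, revMat_mulVec, avg]

lemma lapl_mulVec (s t : E → V) (hd : ∀ v, 0 < deg t v) (x : E → ℂ) (e : E) :
    ((((incMat t).transpose - (incMat s).transpose) * (degMat t)⁻¹ *
      (incMat t - incMat s))).mulVec x e =
      ((deg t (t e) : ℂ))⁻¹ * ((incMat t).mulVec x (t e) - (incMat s).mulVec x (t e))
    - ((deg t (s e) : ℂ))⁻¹ * ((incMat t).mulVec x (s e) - (incMat s).mulVec x (s e)) := by
  rw [mulVec3, degMat_inv t hd, Matrix.sub_mulVec]
  simp only [Pi.sub_apply, incMatT_mulVec, Matrix.mulVec_diagonal, Matrix.sub_mulVec]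

lemma mem_K_iff (s t : E → V) (rev : E → E) (hd : ∀ v, 0 < deg t v) (x : E → ℂ) :
    x ∈ LinearMap.ker (Matrix.mulVecLin (bondS s t rev - 1)) ↔
    ∀ e, x e + x (rev e) = 2 * avg t x (s e) := by
  rw [LinearMap.mem_ker]
  constructor
  · intro h e
    have := congrFun h e
    rw [Matrix.mulVecLin_apply, Matrix.sub_mulVec, Matrix.one_mulVec] at this
    simp only [Pi.sub_apply, Pi.zero_apply] at this
    rw [bondS_mulVec s t rev hd] at this
    linear_combination -this
  · intro h
    funext e
    rw [Matrix.mulVecLin_apply, Matrix.sub_mulVec, Matrix.one_mulVec]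
    have h2 := h e
    show (bondS s t rev).mulVec x e - x e = 0
    rw [bondS_mulVec s t rev hd]
    linear_combination -h2

lemma mem_A_iff (rev : E → E) (x : E → ℂ) :
    x ∈ LinearMap.ker (Matrix.mulVecLin (revMat rev + 1)) ↔
    ∀ e, x (rev e) = - x e := by
  rw [LinearMap.mem_ker]
  constructor
  · intro h e
    have := congrFun h e
    rw [Matrix.mulVecLin_apply, Matrix.add_mulVec, Matrix.one_mulVec] at this
    simp only [Pi.add_apply, Pi.zero_apply] at this
    rw [revMat_mulVec] at this
    linear_combination this
  · intro h
    funext e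
    rw [Matrix.mulVecLin_apply, Matrix.add_mulVec, Matrix.one_mulVec]
    show (revMat rev).mulVec x e + x e = 0
    rw [revMat_mulVec]
    linear_combination h e

lemma mem_HL_iff (s t : E → V) (hd : ∀ v, 0 < deg t v) (x : E → ℂ) :
    x ∈ LinearMap.ker (Matrix.mulVecLin
        (((incMat t).transpose - (incMat s).transpose) * (degMat t)⁻¹ *
          (incMat t - incMat s))) ↔
    ∀ e, ((deg t (t e) : ℂ))⁻¹ * ((incMat t).mulVec x (t e) - (incMat s).mulVec x (t e))
      = ((deg t (s e) : ℂ))⁻¹ * ((incMat t).mulVec x (s e) - (incMat s).mulVec x (s e)) := by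
  rw [LinearMap.mem_ker]
  constructor
  · intro h e
    have := congrFun h e
    rw [Matrix.mulVecLin_apply, lapl_mulVec s t hd] at this
    simp only [Pi.zero_apply] at this
    linear_combination this
  · intro h
    funext e
    rw [Matrix.mulVecLin_apply, lapl_mulVec s t hd]
    show _ - _ = (0 : ℂ)
    linear_combination h e

/-- For antisymmetric `x`, the sum over edges with source `v` is minus the sum over
edges with target `v`. -/
lemma sum_source_eq_neg {s t : E → V} {rev : E → E}
    (hrev : Function.Involutive rev)
    (hsr : ∀ e, s (rev e) = t e) (htr : ∀ e, t (rev e) = s e) (x : E → ℂ) (hx : ∀ e, x (rev e) = - x e) (v : V) :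
    ∑ e ∈ Finset.univ.filter (fun e => s e = v), x e
      = - ∑ e ∈ Finset.univ.filter (fun e => t e = v), x e := by
  rw [← Finset.sum_neg_distrib]
  apply Finset.sum_bij' (fun e _ => rev e) (fun e _ => rev e)
  · intro e he
    simp only [Finset.mem_filter, Finset.mem_univ, true_and] at he ⊢
    rw [htr, he]
  · intro e he
    simp only [Finset.mem_filter, Finset.mem_univ, true_and] at he ⊢
    rw [hsr, he]
  · intro e _; exact hrev e
  · intro e _; exact hrev e
  · intro e _
    rw [hx e, neg_neg]

/-- For antisymmetric `x`, the total sum is zero. -/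
lemma sum_antisym_eq_zero {rev : E → E} (hrev : Function.Involutive rev) (x : E → ℂ) (hx : ∀ e, x (rev e) = - x e) :
    ∑ e, x e = 0 := by
  have h1 : ∑ e, x (rev e) = ∑ e, x e :=
    Equiv.sum_comp (hrev.toPerm rev) x
  have h2 : ∑ e, x (rev e) = - ∑ e, x e := by
    simp_rw [hx]; exact Finset.sum_neg_distrib _
  have := h1.symm.trans h2
  linear_combination this / 2

/-- Constancy from connectivity. -/
lemma const_of_conn {s t : E → V} (g : V → ℂ)
    (hconn : ∀ a b : V, Relation.ReflTransGen (fun p q => ∃ e, s e = p ∧ t e = q) a b)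
    (hg : ∀ e, g (s e) = g (t e)) (a b : V) : g a = g b := by
  induction hconn a b with
  | refl => rfl
  | tail _ h ih =>
      obtain ⟨f, hf1, hf2⟩ := h
      rw [ih, ← hf1, hg f, hf2]

/-- sum over vertices of sums over incoming edges is the total sum. -/
lemma sum_fiber_total {t : E → V} (x : E → ℂ) :
    ∑ v, ∑ e ∈ Finset.univ.filter (fun e => t e = v), x e = ∑ e, x e :=
  Finset.sum_fiberwise _ _ _

/-- Unit flow along an edge. -/
def unitFlow (rev : E → E) (e : E) : E → ℂ :=
  fun f => (if f = e then 1 else 0) - (if f = rev e then 1 else 0)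

lemma unitFlow_antisym {rev : E → E} (hrev : Function.Involutive rev) (e f : E) :
    unitFlow rev e (rev f) = - unitFlow rev e f := by
  unfold unitFlow
  have h1 : (rev f = e) ↔ (f = rev e) := by
    constructor
    · intro h; rw [← h, hrev]
    · intro h; rw [h, hrev]
  have h2 : (rev f = rev e) ↔ (f = e) := by
    constructor
    · intro h; have := congrArg rev h; rwa [hrev, hrev] at this
    · intro h; rw [h]
  simp only [h1, h2]; ring

lemma unitFlow_div {s t : E → V} {rev : E → E} (htr : ∀ e, t (rev e) = s e) (e : E) :
    (incMat t).mulVec (unitFlow rev e)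
      = fun v => (if t e = v then 1 else 0) - (if s e = v then 1 else 0) := by
  funext v
  rw [incMat_mulVec]
  unfold unitFlow
  rw [Finset.sum_sub_distrib]
  have h1 : ∑ f ∈ Finset.univ.filter (fun f => t f = v), (if f = e then (1:ℂ) else 0)
      = if t e = v then 1 else 0 := by
    rw [Finset.sum_ite_eq' _ e]
    simp [Finset.mem_filter]
  have h2 : ∑ f ∈ Finset.univ.filter (fun f => t f = v), (if f = rev e then (1:ℂ) else 0)
      = if s e = v then 1 else 0 := by
    rw [Finset.sum_ite_eq' _ (rev e)]
    simp [Finset.mem_filter, htr]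
  rw [h1, h2]

/-- Existence of antisymmetric flows between connected vertices. -/
lemma flow_exists {s t : E → V} {rev : E → E}
    (hrev : Function.Involutive rev) (htr : ∀ e, t (rev e) = s e)
    {a b : V} (h : Relation.ReflTransGen (fun p q => ∃ e, s e = p ∧ t e = q) a b) :
    ∃ x : E → ℂ, (∀ e, x (rev e) = - x e) ∧
      (incMat t).mulVec x = fun v => (if b = v then 1 else 0) - (if a = v then 1 else 0) := by
  induction h with
  | refl =>
      refine ⟨0, by simp, ?_⟩
      funext v; simp [Matrix.mulVec_zero]
  | @tail p q _ hpq ih =>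
      obtain ⟨x, hx1, hx2⟩ := ih
      obtain ⟨f, hf1, hf2⟩ := hpq
      refine ⟨x + unitFlow rev f, ?_, ?_⟩
      · intro e
        simp only [Pi.add_apply, hx1 e, unitFlow_antisym hrev]
        ring
      · funext v
        rw [Matrix.mulVec_add, Pi.add_apply, hx2, unitFlow_div htr]
        simp only [hf1, hf2]
        ring

lemma two_mul_finrank_ker_rev {rev : E → E} (hrev : Function.Involutive rev)
    (hne : ∀ e, rev e ≠ e) :
    2 * Module.finrank ℂ ↥(LinearMap.ker (Matrix.mulVecLin (revMat rev + 1)))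
      = Fintype.card E := by
  classical
  set q : E ≃ Fin (Fintype.card E) := Fintype.equivFin E with hqdef
  set O : Finset E := Finset.univ.filter (fun e => q e < q (rev e)) with hOdef
  have hmem : ∀ e, e ∈ O ↔ q e < q (rev e) := by
    intro e; simp [hOdef]
  have hqne : ∀ e, q e ≠ q (rev e) := by
    intro e h
    exact (hne e) (q.injective h.symm)
  have hO : ∀ e, e ∉ O → rev e ∈ O := by
    intro e h
    rw [hmem] at h ⊢
    rw [hrev e]
    exact lt_of_le_of_ne (not_lt.mp h) (hqne e).symm
  have hO2 : ∀ e, e ∈ O → rev e ∉ O := by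
    intro e h h2
    rw [hmem] at h h2
    rw [hrev e] at h2
    exact absurd h (not_lt.mpr h2.le)
  -- the extension map
  let F : ((↥O) → ℂ) →ₗ[ℂ] (E → ℂ) :=
    { toFun := fun g e => if h : e ∈ O then g ⟨e, h⟩ else - g ⟨rev e, hO e h⟩
      map_add' := by intro g1 g2; funext e; by_cases h : e ∈ O <;> simp [h] <;> ring
      map_smul' := by intro c g; funext e; by_cases h : e ∈ O <;> simp [h] <;> ring }
  have hF_inj : Function.Injective F := by
    intro g1 g2 h
    funext o
    have := congrFun h o.1
    simpa [F, o.2] using this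
  have hF_range : LinearMap.range F = LinearMap.ker (Matrix.mulVecLin (revMat rev + 1)) := by
    apply le_antisymm
    · rintro x ⟨g, rfl⟩
      rw [mem_A_iff]
      intro e
      by_cases h : e ∈ O
      · have h2 := hO2 e h
        simp only [F, LinearMap.coe_mk, AddHom.coe_mk, dif_neg h2, dif_pos h]
        congr 2
        exact Subtype.ext (hrev e)
      · have h2 := hO e h
        simp only [F, LinearMap.coe_mk, AddHom.coe_mk, dif_neg h, dif_pos h2, neg_neg]
    · intro x hx
      rw [mem_A_iff] at hx
      refine ⟨fun o => x o.1, ?_⟩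
      funext e
      by_cases h : e ∈ O
      · simp [F, h]
      · simp only [F, LinearMap.coe_mk, AddHom.coe_mk, dif_neg h]
        rw [← neg_eq_iff_eq_neg.mpr (hx e)]
  have h1 : Module.finrank ℂ ↥(LinearMap.ker (Matrix.mulVecLin (revMat rev + 1)))
      = O.card := by
    rw [← hF_range]
    rw [← LinearEquiv.finrank_eq (LinearEquiv.ofInjective F hF_inj)]
    simp [Module.finrank_pi]
  rw [h1]
  -- counting
  have hcard : O.card + (Finset.univ.filter (fun e => ¬ q e < q (rev e))).card
      = Fintype.card E := by
    rw [Finset.card_filter_add_card_filter_not]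
    rfl
  have hbij : (Finset.univ.filter (fun e => ¬ q e < q (rev e))).card = O.card := by
    apply Finset.card_bij (fun e _ => rev e)
    · intro e he
      simp only [Finset.mem_filter, Finset.mem_univ, true_and] at he
      exact hO e (by rw [hmem]; exact he)
    · intro e1 h1' e2 h2' h
      have := congrArg rev h
      rwa [hrev, hrev] at this
    · intro e he
      refine ⟨rev e, ?_, hrev e⟩
      simp only [Finset.mem_filter, Finset.mem_univ, true_and]
      rw [hmem] at he
      rw [hrev]
      exact not_lt.mpr he.le
  omega

def sumL (V : Type*) [Fintype V] : (V → ℂ) →ₗ[ℂ] ℂ :=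
  { toFun := fun g => ∑ v, g v
    map_add' := fun g1 g2 => Finset.sum_add_distrib
    map_smul' := fun c g => by simp [Finset.mul_sum] }

lemma finrank_ker_sumL [Nonempty V] :
    Module.finrank ℂ ↥(LinearMap.ker (sumL V)) + 1 = Fintype.card V := by
  have hsurj : Function.Surjective (sumL V) := by
    intro c
    refine ⟨fun v => if v = Classical.arbitrary V then c else 0, ?_⟩
    simp [sumL, Finset.sum_ite_eq']
  have h := LinearMap.finrank_range_add_finrank_ker (sumL V)
  rw [LinearMap.range_eq_top.mpr hsurj] at h
  rw [finrank_top, Module.finrank_self, Module.finrank_pi] at h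
  omega

lemma finrank_inf_ker [Nonempty V] (s t : E → V) (rev : E → E)
    (hrev : Function.Involutive rev)
    (hsr : ∀ e, s (rev e) = t e) (htr : ∀ e, t (rev e) = s e)
    (hconn : ∀ a b : V, Relation.ReflTransGen (fun p q => ∃ e, s e = p ∧ t e = q) a b) :
    Module.finrank ℂ ↥(LinearMap.ker (Matrix.mulVecLin (revMat rev + 1))
        ⊓ LinearMap.ker ((incMat t).mulVecLin)) + Fintype.card V
      = Module.finrank ℂ ↥(LinearMap.ker (Matrix.mulVecLin (revMat rev + 1))) + 1 := by
  classical
  set A := LinearMap.ker (Matrix.mulVecLin (revMat rev + 1)) with hA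
  set d := (incMat t).mulVecLin with hd'
  set D : ↥A →ₗ[ℂ] (V → ℂ) := d.comp A.subtype with hD
  have hkerD : Module.finrank ℂ ↥(LinearMap.ker D)
      = Module.finrank ℂ ↥(A ⊓ LinearMap.ker d) := by
    have h1 : LinearMap.ker D = Submodule.comap A.subtype (A ⊓ LinearMap.ker d) := by
      rw [hD, LinearMap.ker_comp, Submodule.comap_inf, Submodule.comap_subtype_self, top_inf_eq]
    rw [h1]
    exact LinearEquiv.finrank_eq (Submodule.comapSubtypeEquivOfLe inf_le_left)
  have hrange : LinearMap.range D = LinearMap.ker (sumL V) := by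
    apply le_antisymm
    · rintro g ⟨⟨x, hxA⟩, rfl⟩
      rw [LinearMap.mem_ker]
      show ∑ v, (d.comp A.subtype) ⟨x, hxA⟩ v = 0
      have : ∀ v, (d.comp A.subtype) ⟨x, hxA⟩ v
          = ∑ e ∈ Finset.univ.filter (fun e => t e = v), x e := by
        intro v
        show d x v = _
        rw [hd', Matrix.mulVecLin_apply, incMat_mulVec]
      simp_rw [this]
      rw [sum_fiber_total]
      exact sum_antisym_eq_zero hrev x ((mem_A_iff rev x).mp hxA)
    · intro g hg
      rw [LinearMap.mem_ker] at hg
      have hg' : ∑ v, g v = 0 := hg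
      set v0 : V := Classical.arbitrary V with hv0
      have hflow : ∀ v : V, ∃ x : E → ℂ, (∀ e, x (rev e) = -x e) ∧
          (incMat t).mulVec x = fun w => (if v = w then 1 else 0) - (if v0 = w then 1 else 0) :=
        fun v => flow_exists hrev htr (hconn v0 v)
      choose xf hxf1 hxf2 using hflow
      have hmem : ∀ v, xf v ∈ A := fun v => (mem_A_iff rev _).mpr (hxf1 v)
      have hgeq : g = ∑ v, g v • D ⟨xf v, hmem v⟩ := by
        funext w
        rw [Finset.sum_apply]
        have : ∀ v, (g v • D ⟨xf v, hmem v⟩) w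
            = g v * ((if v = w then 1 else 0) - (if v0 = w then 1 else 0)) := by
          intro v
          have : D ⟨xf v, hmem v⟩ = (incMat t).mulVec (xf v) := rfl
          rw [Pi.smul_apply, this, hxf2 v]
          simp
        simp_rw [this, mul_sub, Finset.sum_sub_distrib]
        have e1 : ∑ v, g v * (if v = w then 1 else 0) = g w := by
          simp [mul_ite]
        have e2 : ∑ v, g v * (if v0 = w then 1 else 0) = 0 := by
          by_cases hw : v0 = w <;> simp [hw, hg']
        rw [e1, e2, sub_zero]
      rw [hgeq]
      exact Submodule.sum_mem _ fun v _ =>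
        Submodule.smul_mem _ _ (LinearMap.mem_range_self D _)
  have hrn := LinearMap.finrank_range_add_finrank_ker D
  rw [hrange, hkerD] at hrn
  have hsum := finrank_ker_sumL (V := V)
  have hAfr : Module.finrank ℂ ↥A = Module.finrank ℂ A := rfl
  omega

lemma E_nonempty [Nonempty V] {t : E → V} (hd : ∀ v, 0 < deg t v) : Nonempty E := by
  obtain ⟨e, -⟩ := Finset.card_pos.mp (hd (Classical.arbitrary V))
  exact ⟨e⟩

lemma sum_deg (t : E → V) : ∑ v, (deg t v : ℂ) = (Fintype.card E : ℂ) := by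
  have : ∑ v, deg t v = Fintype.card E := by
    rw [← Finset.card_univ, Finset.card_eq_sum_card_fiberwise
      (f := t) (t := Finset.univ) (fun e _ => Finset.mem_univ _)]
    rfl
  exact_mod_cast this

lemma inf_HL_eq [Nonempty V] (s t : E → V) (rev : E → E)
    (hrev : Function.Involutive rev)
    (hsr : ∀ e, s (rev e) = t e) (htr : ∀ e, t (rev e) = s e)
    (hd : ∀ v, 0 < deg t v)
    (hconn : ∀ a b : V, Relation.ReflTransGen (fun p q => ∃ e, s e = p ∧ t e = q) a b) :
    LinearMap.ker (Matrix.mulVecLin (revMat rev + 1)) ⊓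
      LinearMap.ker (Matrix.mulVecLin
        (((incMat t).transpose - (incMat s).transpose) * (degMat t)⁻¹ *
          (incMat t - incMat s)))
    = LinearMap.ker (Matrix.mulVecLin (revMat rev + 1)) ⊓
        LinearMap.ker ((incMat t).mulVecLin) := by
  have hdeg : ∀ v, (deg t v : ℂ) ≠ 0 := fun v => by exact_mod_cast (hd v).ne'
  ext x
  simp only [Submodule.mem_inf]
  constructor
  · rintro ⟨hxA, hxL⟩
    refine ⟨hxA, ?_⟩
    have hx := (mem_A_iff rev x).mp hxA
    have hST : ∀ v, (incMat s).mulVec x v = - (incMat t).mulVec x v := by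
      intro v
      rw [incMat_mulVec, incMat_mulVec]
      exact sum_source_eq_neg hrev hsr htr x hx v
    rw [mem_HL_iff s t hd] at hxL
    -- define g v = (deg v)⁻¹ * (incMat t).mulVec x v
    set g : V → ℂ := fun v => ((deg t v : ℂ))⁻¹ * (incMat t).mulVec x v with hgdef
    have hge : ∀ e, g (s e) = g (t e) := by
      intro e
      have := hxL e
      rw [hST, hST] at this
      have h2 : (deg t (t e) : ℂ)⁻¹ * (2 * (incMat t).mulVec x (t e))
          = (deg t (s e) : ℂ)⁻¹ * (2 * (incMat t).mulVec x (s e)) := by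
        linear_combination this
      simp only [hgdef]
      linear_combination -h2 / 2
    have hconst : ∀ a b, g a = g b := const_of_conn g hconn hge
    set v0 : V := Classical.arbitrary V with hv0
    have hsum0 : ∑ v, (deg t v : ℂ) * g v = 0 := by
      have : ∀ v, (deg t v : ℂ) * g v = (incMat t).mulVec x v := by
        intro v
        rw [hgdef]
        exact mul_inv_cancel_left₀ (hdeg v) _
      simp_rw [this]
      have : ∀ v, (incMat t).mulVec x v
          = ∑ e ∈ Finset.univ.filter (fun e => t e = v), x e := fun v => incMat_mulVec t x v
      simp_rw [this]
      rw [sum_fiber_total]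
      exact sum_antisym_eq_zero hrev x hx
    have hc0 : g v0 = 0 := by
      have h1 : ∑ v, (deg t v : ℂ) * g v = (∑ v, (deg t v : ℂ)) * g v0 := by
        rw [Finset.sum_mul]
        apply Finset.sum_congr rfl
        intro v _
        rw [hconst v v0]
      rw [h1, sum_deg] at hsum0
      have hE : (Fintype.card E : ℂ) ≠ 0 := by
        have : Nonempty E := E_nonempty hd
        simp [Fintype.card_pos.ne']
      exact (mul_eq_zero.mp hsum0).resolve_left hE
    rw [LinearMap.mem_ker]
    funext v
    have : g v = 0 := (hconst v v0).trans hc0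
    have h2 : (incMat t).mulVec x v = (deg t v : ℂ) * g v := by
      rw [hgdef]; exact (mul_inv_cancel_left₀ (hdeg v) _).symm
    rw [Matrix.mulVecLin_apply, Pi.zero_apply, h2, this, mul_zero]
  · rintro ⟨hxA, hxd⟩
    refine ⟨hxA, ?_⟩
    have hx := (mem_A_iff rev x).mp hxA
    have hT0 : ∀ v, (incMat t).mulVec x v = 0 := by
      intro v
      have := congrFun (LinearMap.mem_ker.mp hxd) v
      rwa [Matrix.mulVecLin_apply, Pi.zero_apply] at this
    have hS0 : ∀ v, (incMat s).mulVec x v = 0 := by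
      intro v
      rw [incMat_mulVec, sum_source_eq_neg hrev hsr htr x hx v, ← incMat_mulVec, hT0, neg_zero]
    rw [mem_HL_iff s t hd]
    intro e
    rw [hT0, hT0, hS0, hS0]
    ring

/-- The eigenspace of `S` for eigenvalue `1` has dimension `β + 1 = m − n + 2`
(stated additively), and it is spanned by the all-ones vector together with the
τ-antisymmetric harmonic 1-forms. -/
theorem stmt11 [Nonempty V] (s t : E → V) (rev : E → E)
    (hrev : Function.Involutive rev) (hne : ∀ e, rev e ≠ e)
    (hsr : ∀ e, s (rev e) = t e) (htr : ∀ e, t (rev e) = s e)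
    (hd : ∀ v, 0 < deg t v)
    (hconn : ∀ a b : V, Relation.ReflTransGen (fun p q => ∃ e, s e = p ∧ t e = q) a b) :
    Module.finrank ℂ ↥(LinearMap.ker (Matrix.mulVecLin (bondS s t rev - 1)))
        + Fintype.card V = Fintype.card E / 2 + 2 ∧
    LinearMap.ker (Matrix.mulVecLin (bondS s t rev - 1))
      = Submodule.span ℂ {(fun _ => 1 : E → ℂ)} ⊔
        (LinearMap.ker (Matrix.mulVecLin (revMat rev + 1)) ⊓
          LinearMap.ker (Matrix.mulVecLin
            (((incMat t).transpose - (incMat s).transpose) * (degMat t)⁻¹ *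
              (incMat t - incMat s)))) := by
  classical
  have hEne : Nonempty E := E_nonempty hd
  have hdeg : ∀ v, (deg t v : ℂ) ≠ 0 := fun v => by exact_mod_cast (hd v).ne'
  have hinf := inf_HL_eq s t rev hrev hsr htr hd hconn
  have havgT : ∀ (x : E → ℂ) v, avg t x v = ((deg t v : ℂ))⁻¹ * (incMat t).mulVec x v := by
    intro x v; rw [avg, incMat_mulVec]
  have havg1 : ∀ v, avg t (fun _ => (1:ℂ)) v = 1 := by
    intro v
    rw [avg, Finset.sum_const, nsmul_eq_mul, mul_one]
    exact inv_mul_cancel₀ (hdeg v)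
  -- the span equality
  have hspan : LinearMap.ker (Matrix.mulVecLin (bondS s t rev - 1))
      = Submodule.span ℂ {(fun _ => 1 : E → ℂ)} ⊔
        (LinearMap.ker (Matrix.mulVecLin (revMat rev + 1)) ⊓
          LinearMap.ker (Matrix.mulVecLin
            (((incMat t).transpose - (incMat s).transpose) * (degMat t)⁻¹ *
              (incMat t - incMat s)))) := by
    apply le_antisymm
    · -- K ≤ W ⊔ J
      intro x hxK
      rw [mem_K_iff s t rev hd] at hxK
      have hge : ∀ e, avg t x (s e) = avg t x (t e) := by
        intro e
        have h1 := hxK e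
        have h2 := hxK (rev e)
        rw [hrev e, hsr e] at h2
        linear_combination (h2 - h1) / 2
      have hconst := const_of_conn (avg t x) hconn hge
      set c : ℂ := avg t x (Classical.arbitrary V) with hc
      set y : E → ℂ := x - c • (fun _ : E => (1:ℂ)) with hy
      have hyA : y ∈ LinearMap.ker (Matrix.mulVecLin (revMat rev + 1)) := by
        rw [mem_A_iff]
        intro e
        have h1 := hxK e
        have h2 : avg t x (s e) = c := hconst _ _
        simp only [hy, Pi.sub_apply, Pi.smul_apply, smul_eq_mul, mul_one]
        linear_combination h1 + 2 * h2
      have hyd : y ∈ LinearMap.ker ((incMat t).mulVecLin) := by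
        rw [LinearMap.mem_ker]
        funext v
        rw [map_sub, _root_.map_smul]
        have h1 : (incMat t).mulVecLin x v = (deg t v : ℂ) * c := by
          rw [Matrix.mulVecLin_apply, ← mul_inv_cancel_left₀ (hdeg v) ((incMat t).mulVec x v),
            ← havgT, hconst v (Classical.arbitrary V)]
        have h2 : (incMat t).mulVecLin (fun _ => (1:ℂ)) v = (deg t v : ℂ) := by
          rw [Matrix.mulVecLin_apply, incMat_mulVec, Finset.sum_const, nsmul_eq_mul, mul_one]
          rfl
        simp only [Pi.sub_apply, Pi.smul_apply, Pi.zero_apply, smul_eq_mul, h1, h2]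
        ring
      rw [Submodule.mem_sup]
      refine ⟨c • (fun _ : E => (1:ℂ)), Submodule.smul_mem _ _ (Submodule.mem_span_singleton_self _),
        y, ?_, by simp [hy]⟩
      rw [hinf]
      exact ⟨hyA, hyd⟩
    · -- W ⊔ J ≤ K
      rw [sup_le_iff]
      constructor
      · rw [Submodule.span_singleton_le_iff_mem, mem_K_iff s t rev hd]
        intro e
        rw [havg1]
        ring
      · rw [hinf]
        rintro x ⟨hxA, hxd⟩
        rw [mem_K_iff s t rev hd]
        intro e
        have hx := (mem_A_iff rev x).mp hxA
        have h0 : (incMat t).mulVec x (s e) = 0 := by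
          have := congrFun (LinearMap.mem_ker.mp hxd) (s e)
          rwa [Matrix.mulVecLin_apply, Pi.zero_apply] at this
        rw [havgT, h0, hx e]
        ring
  refine ⟨?_, hspan⟩
  -- dimension count
  have hJbot : Submodule.span ℂ {(fun _ => 1 : E → ℂ)} ⊓
      (LinearMap.ker (Matrix.mulVecLin (revMat rev + 1)) ⊓
        LinearMap.ker (Matrix.mulVecLin
          (((incMat t).transpose - (incMat s).transpose) * (degMat t)⁻¹ *
            (incMat t - incMat s)))) = ⊥ := by
    rw [eq_bot_iff]
    rintro x ⟨hxW, hxJ, -⟩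
    obtain ⟨a, rfl⟩ := Submodule.mem_span_singleton.mp hxW
    have hx := (mem_A_iff rev _).mp hxJ
    have := hx (Classical.arbitrary E)
    simp only [Pi.smul_apply, smul_eq_mul, mul_one] at this
    have ha : a = 0 := by linear_combination this / 2
    simp [ha, Submodule.mem_bot]
  have hdim := Submodule.finrank_sup_add_finrank_inf_eq
    (Submodule.span ℂ {(fun _ => 1 : E → ℂ)})
    (LinearMap.ker (Matrix.mulVecLin (revMat rev + 1)) ⊓
      LinearMap.ker (Matrix.mulVecLin
        (((incMat t).transpose - (incMat s).transpose) * (degMat t)⁻¹ *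
          (incMat t - incMat s))))
  rw [hJbot, finrank_bot, add_zero] at hdim
  have hone : (fun _ => (1:ℂ)) ≠ (0 : E → ℂ) := by
    intro h
    have := congrFun h (Classical.arbitrary E)
    simp at this
  have hWr : Module.finrank ℂ ↥(Submodule.span ℂ {(fun _ => 1 : E → ℂ)}) = 1 :=
    finrank_span_singleton hone
  have hKdim : Module.finrank ℂ ↥(LinearMap.ker (Matrix.mulVecLin (bondS s t rev - 1)))
      = Module.finrank ℂ ↥(Submodule.span ℂ {(fun _ => 1 : E → ℂ)} ⊔
        (LinearMap.ker (Matrix.mulVecLin (revMat rev + 1)) ⊓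
          LinearMap.ker (Matrix.mulVecLin
            (((incMat t).transpose - (incMat s).transpose) * (degMat t)⁻¹ *
              (incMat t - incMat s))))) := by
    rw [hspan]
  have hJdim : Module.finrank ℂ ↥(LinearMap.ker (Matrix.mulVecLin (revMat rev + 1)) ⊓
        LinearMap.ker (Matrix.mulVecLin
          (((incMat t).transpose - (incMat s).transpose) * (degMat t)⁻¹ *
            (incMat t - incMat s))))
      = Module.finrank ℂ ↥(LinearMap.ker (Matrix.mulVecLin (revMat rev + 1)) ⊓
          LinearMap.ker ((incMat t).mulVecLin)) := by
    rw [hinf]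
  have h3 := finrank_inf_ker s t rev hrev hsr htr hconn
  have h4 := two_mul_finrank_ker_rev hrev hne
  omega
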